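/- For every time step k with 0 < k ≤ 1, every integer n ≥ 1, and every measurable function h : [0, n·k] → [0, ∞) with ∫_0^{nk} h(t)² dt < ∞, setting t_i = i·k, one has (1/k)·∑_{i=1}^{n} ( ∫_{t_{i−1}}^{t_i} ((t − t_{i−1})/min(1, t))·h(t) dt )² ≤ ∫_0^{nk} h(t)² dt. -/

import Mathlib

open MeasureTheory intervalIntegral

/-- Cauchy–Schwarz for interval integrals: `(∫ f)² ≤ (b-a) ∫ f²`. -/
lemma cs_interval {a b : ℝ} (hab : a ≤ b) {f : ℝ → ℝ}
    (h1 : IntervalIntegrable f volume a b)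
    (h2 : IntervalIntegrable (fun t => f t ^ 2) volume a b) :
    (∫ t in a..b, f t) ^ 2 ≤ (b - a) * ∫ t in a..b, f t ^ 2 := by
  set I := ∫ t in a..b, f t with hI
  set J := ∫ t in a..b, f t ^ 2 with hJ
  set L := b - a with hL
  have hL0 : 0 ≤ L := by linarith
  rcases eq_or_lt_of_le hL0 with hLe | hLp
  · have hba : a = b := by linarith [hLe]
    subst hba
    simp [hI, ← hLe]
  · have key : 0 ≤ ∫ t in a..b, (L * f t - I) ^ 2 := by
      apply intervalIntegral.integral_nonneg hab
      intro t _; positivity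
    have expand : (∫ t in a..b, (L * f t - I) ^ 2)
        = L ^ 2 * J - 2 * L * I * I + I ^ 2 * L := by
      have : ∀ t, (L * f t - I) ^ 2 = L ^ 2 * f t ^ 2 - (2 * L * I) * f t + I ^ 2 := by
        intro t; ring
      simp_rw [this]
      rw [intervalIntegral.integral_add, intervalIntegral.integral_sub,
        intervalIntegral.integral_const_mul, intervalIntegral.integral_const_mul,
        intervalIntegral.integral_const]
      · simp only [smul_eq_mul]; ring
      · exact h2.const_mul _
      · exact h1.const_mul _
      · exact (h2.const_mul _).sub (h1.const_mul _)
      · exact intervalIntegrable_const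
    have : 0 ≤ L * (L * J - I ^ 2) := by
      rw [expand] at key; nlinarith [key]
    have := nonneg_of_mul_nonneg_right this hLp
    nlinarith [this]

theorem truncation_sum_bound_r1
    (k : ℝ) (hk0 : 0 < k) (hk1 : k ≤ 1) (n : ℕ) (hn : 1 ≤ n)
    (h : ℝ → ℝ) (hmeas : Measurable h)
    (hnonneg : ∀ t ∈ Set.Icc (0:ℝ) ((n : ℝ) * k), 0 ≤ h t)
    (hint : MeasureTheory.IntegrableOn (fun t => (h t) ^ 2)
      (Set.Icc (0:ℝ) ((n : ℝ) * k))) :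
    (1 / k) * ∑ i ∈ Finset.Icc 1 n,
        (∫ t in (((i : ℝ) - 1) * k)..((i : ℝ) * k),
          ((t - ((i : ℝ) - 1) * k) / min 1 t) * h t) ^ 2 ≤
      ∫ t in (0:ℝ)..((n : ℝ) * k), (h t) ^ 2 := by
  -- h is integrable on the big interval (L² ⊂ L¹ via |h| ≤ 1 + h²)
  have hinth : IntegrableOn h (Set.Icc (0:ℝ) ((n : ℝ) * k)) := by
    have hc : IntegrableOn (fun _ : ℝ => (1:ℝ)) (Set.Icc (0:ℝ) ((n : ℝ) * k)) :=
      (integrableOn_const_iff).mpr (Or.inr (by simp [Real.volume_Icc]; exact ENNReal.mul_lt_top (ENNReal.natCast_lt_top n) ENNReal.ofReal_lt_top))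
    refine Integrable.mono (hint.add hc) hmeas.aestronglyMeasurable ?_
    filter_upwards with t
    have : |h t| ≤ 1 + h t ^ 2 := by nlinarith [abs_nonneg (h t), sq_abs (h t)]
    simpa [abs_of_nonneg (by positivity : (0:ℝ) ≤ h t ^ 2 + 1)] using
      this.trans_eq (by ring)
  -- sub-interval facts
  have hsub : ∀ i ∈ Finset.Icc 1 n,
      Set.uIcc (((i:ℝ) - 1) * k) ((i:ℝ) * k) ⊆ Set.Icc (0:ℝ) ((n:ℝ) * k) := by
    intro i hi
    rw [Finset.mem_Icc] at hi
    have h1 : (1:ℝ) ≤ (i:ℝ) := by exact_mod_cast hi.1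
    have h2 : (i:ℝ) ≤ (n:ℝ) := by exact_mod_cast hi.2
    rw [Set.uIcc_of_le (by nlinarith)]
    apply Set.Icc_subset_Icc <;> nlinarith
  have key : ∀ i ∈ Finset.Icc 1 n,
      (∫ t in (((i : ℝ) - 1) * k)..((i : ℝ) * k),
          ((t - ((i : ℝ) - 1) * k) / min 1 t) * h t) ^ 2
        ≤ k * ∫ t in (((i : ℝ) - 1) * k)..((i : ℝ) * k), h t ^ 2 := by
    intro i hi
    rw [Finset.mem_Icc] at hi
    have h1 : (1:ℝ) ≤ (i:ℝ) := by exact_mod_cast hi.1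
    have hab : ((i:ℝ) - 1) * k ≤ (i:ℝ) * k := by nlinarith
    set a := ((i:ℝ) - 1) * k with ha
    set b := ((i:ℝ) * k) with hb
    have ha0 : 0 ≤ a := by rw [ha]; nlinarith
    have hsubI := hsub i (by rw [Finset.mem_Icc]; exact hi)
    have hih : IntervalIntegrable h volume a b :=
      (hinth.mono_set hsubI).intervalIntegrable
    have hih2 : IntervalIntegrable (fun t => h t ^ 2) volume a b :=
      (hint.mono_set hsubI).intervalIntegrable
    -- weight bounds on [a,b]
    have hw : ∀ t ∈ Set.Icc a b,
        0 ≤ ((t - a) / min 1 t) * h t ∧ ((t - a) / min 1 t) * h t ≤ h t := by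
      intro t ht
      have hht : 0 ≤ h t := hnonneg t (hsubI (by rwa [Set.uIcc_of_le hab]))
      have h0t : 0 ≤ t := le_trans ha0 ht.1
      rcases eq_or_lt_of_le h0t with h0 | h0
      · have ht0 : t = 0 := h0.symm
        have ha0' : a = 0 := le_antisymm (ht0 ▸ ht.1) ha0
        subst ht0
        exact ⟨by simp [ha0'], by simpa [ha0'] using hht⟩
      · have hmin : 0 < min 1 t := lt_min one_pos h0
        have hta : 0 ≤ t - a := by linarith [ht.1]
        constructor
        · positivity
        · have hwle : (t - a) / min 1 t ≤ 1 := by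
            rw [div_le_one hmin]
            have hba : t - a ≤ b - a := by linarith [ht.2]
            have hbak : b - a = k := by rw [ha, hb]; ring
            rcases le_total (1:ℝ) t with hc | hc
            · rw [min_eq_left hc]; linarith [hbak ▸ hba]
            · rw [min_eq_right hc]; linarith
          calc ((t - a) / min 1 t) * h t ≤ 1 * h t :=
                mul_le_mul_of_nonneg_right hwle hht
            _ = h t := one_mul _
    -- integrability of the weighted function
    have hwmeas : Measurable fun t => ((t - a) / min 1 t) * h t := by
      exact (((measurable_id.sub measurable_const).div
        (measurable_const.min measurable_id))).mul hmeas
    have hiwh : IntervalIntegrable (fun t => ((t - a) / min 1 t) * h t) volume a b := by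
      rw [intervalIntegrable_iff_integrableOn_Icc_of_le hab]
      have hIccsub : Set.Icc a b ⊆ Set.Icc (0:ℝ) ((n:ℝ) * k) := by
        rw [← Set.uIcc_of_le hab]; exact hsubI
      refine Integrable.mono (hinth.mono_set hIccsub) hwmeas.aestronglyMeasurable ?_
      rw [ae_restrict_iff' measurableSet_Icc]
      filter_upwards with t ht
      have := hw t ht
      rw [Real.norm_eq_abs, Real.norm_eq_abs, abs_of_nonneg this.1]
      exact this.2.trans (le_abs_self _)
    -- 0 ≤ ∫ wh ≤ ∫ h
    have hwh0 : 0 ≤ ∫ t in a..b, ((t - a) / min 1 t) * h t :=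
      intervalIntegral.integral_nonneg hab fun t ht => (hw t ht).1
    have hwh1 : (∫ t in a..b, ((t - a) / min 1 t) * h t) ≤ ∫ t in a..b, h t :=
      intervalIntegral.integral_mono_on hab hiwh hih fun t ht => (hw t ht).2
    have hsq : (∫ t in a..b, ((t - a) / min 1 t) * h t) ^ 2
        ≤ (∫ t in a..b, h t) ^ 2 := by
      apply pow_le_pow_left₀ hwh0 hwh1
    refine hsq.trans ?_
    have := cs_interval hab hih hih2
    have hbak : b - a = k := by rw [ha, hb]; ring
    rw [hbak] at this
    exact this
  -- sum the bound
  have hsum : ∑ i ∈ Finset.Icc 1 n,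
      (∫ t in (((i : ℝ) - 1) * k)..((i : ℝ) * k),
        ((t - ((i : ℝ) - 1) * k) / min 1 t) * h t) ^ 2
      ≤ ∑ i ∈ Finset.Icc 1 n,
        k * ∫ t in (((i : ℝ) - 1) * k)..((i : ℝ) * k), h t ^ 2 :=
    Finset.sum_le_sum key
  -- adjacent intervals
  have hadj : ∑ i ∈ Finset.Icc 1 n,
      (∫ t in (((i : ℝ) - 1) * k)..((i : ℝ) * k), h t ^ 2)
      = ∫ t in (0:ℝ)..((n : ℝ) * k), h t ^ 2 := by
    have hre : ∑ i ∈ Finset.Icc 1 n,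
        (∫ t in (((i : ℝ) - 1) * k)..((i : ℝ) * k), h t ^ 2)
        = ∑ j ∈ Finset.range n,
          ∫ t in ((j : ℝ) * k)..(((j : ℝ) + 1) * k), h t ^ 2 := by
      rw [← Finset.Ico_add_one_right_eq_Icc, Finset.sum_Ico_eq_sum_range]
      apply Finset.sum_congr (by norm_num)
      intro j _
      push_cast
      ring_nf
    rw [hre]
    have := intervalIntegral.sum_integral_adjacent_intervals
      (f := fun t => h t ^ 2) (μ := volume) (a := fun j => (j : ℝ) * k) (n := n) ?_
    · rw [show ∑ j ∈ Finset.range n, ∫ t in ((j : ℝ) * k)..(((j : ℝ) + 1) * k), h t ^ 2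
          = ∑ j ∈ Finset.range n, ∫ t in ((j : ℝ) * k)..(((j + 1 : ℕ) : ℝ) * k), h t ^ 2
        from Finset.sum_congr rfl (fun j _ => by push_cast; ring_nf), this]
      norm_num
    · intro j hj
      apply IntegrableOn.intervalIntegrable
      apply hint.mono_set
      have hj' : (j:ℝ) + 1 ≤ (n:ℝ) := by exact_mod_cast hj
      rw [Set.uIcc_of_le (by push_cast; nlinarith [j.cast_nonneg (α := ℝ)])]
      push_cast
      apply Set.Icc_subset_Icc <;> nlinarith [j.cast_nonneg (α := ℝ)]
  rw [← Finset.mul_sum] at hsum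
  rw [hadj] at hsum
  rw [one_div, inv_mul_le_iff₀ hk0]
  linarith [hsum]
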